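/- arXiv:1603.06797 — 5 statements merged into one kernel-verified Lean document; each statement's English description precedes it below -/
import Mathlib

section
/- Let f = Σ_{n≥1} ((−1)^{n+1}/n)·u^{−n}·tⁿ ∈ k((u))((t)). Then e·u·(u+t)·t^e·D(f) = t·(2u+q); in particular t^e·D(f) lies in the fraction field (inside k((u))((t))) of the canonical image of the iterated power series ring k[[u]][[t]]. -/
private lemma hs_single_mul_coeff {R : Type*} [NonUnitalNonAssocSemiring R]
    (b : ℤ) (r : R) (x : HahnSeries ℤ R) (n : ℤ) :
    (HahnSeries.single b r * x).coeff n = r * x.coeff (n - b) := by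
  have h := HahnSeries.coeff_single_mul_add (Γ := ℤ) (R := R) (r := r) (x := x) (a := n - b) (b := b)
  simpa using h

private lemma hs_single_add {R : Type*} [AddMonoid R] (a : ℤ) (x y : R) :
    HahnSeries.single a (x + y) = HahnSeries.single a x + HahnSeries.single a y := by
  apply HahnSeries.coeff_injective; funext j
  simp only [HahnSeries.coeff_single, HahnSeries.coeff_add]
  split_ifs <;> simp

/-- In `k((u))((t))` (iterated formal Laurent series over a field `k` of
characteristic zero), let `f = Σ_{n≥1} ((−1)^{n+1}/n)·u^{−n}·tⁿ` and let
`D(Σ_n f_n tⁿ) = Σ_n ((n/e)·f_n − ((u+q)/e)·f_n′)·t^{n−e}` (with `e ≥ 1`, `q ∈ k`, and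
`f ↦ f′` the formal `u`-derivative).  Then `e·u·(u+t)·t^e·D(f) = t·(2u+q)`; in particular
`t^e·D(f)` lies in the fraction field (inside `k((u))((t))`) of the canonical image of the
iterated power series ring `k[[u]][[t]]`. -/
theorem stmt_8 {k : Type*} [Field k] [CharZero k]
    (e : ℕ) (he : 1 ≤ e) (q : k)
    (du : LaurentSeries k → LaurentSeries k)
    (hdu : ∀ (g : LaurentSeries k) (m : ℤ), (du g).coeff m = (m + 1) • g.coeff (m + 1))
    (D : LaurentSeries (LaurentSeries k) → LaurentSeries (LaurentSeries k))
    (hD : ∀ (f : LaurentSeries (LaurentSeries k)) (m : ℤ),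
      (D f).coeff m =
        HahnSeries.C (((m + (e : ℤ) : ℤ) : k) / (e : k)) * f.coeff (m + e)
        - (HahnSeries.single (1 : ℤ) (1 : k) + HahnSeries.C q) / (e : LaurentSeries k)
            * du (f.coeff (m + e)))
    (f : LaurentSeries (LaurentSeries k))
    (hf : ∀ n : ℤ, f.coeff n =
      if 1 ≤ n then HahnSeries.single (-n) ((-1 : k) ^ (n + 1) / (n : k)) else 0) :
    (e : LaurentSeries (LaurentSeries k)) *
        HahnSeries.single (0 : ℤ) (HahnSeries.single (1 : ℤ) (1 : k)) *
        (HahnSeries.single (0 : ℤ) (HahnSeries.single (1 : ℤ) (1 : k)) +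
          HahnSeries.single (1 : ℤ) (1 : LaurentSeries k)) *
        HahnSeries.single (e : ℤ) (1 : LaurentSeries k) * D f =
      HahnSeries.single (1 : ℤ) (1 : LaurentSeries k) *
        (2 * HahnSeries.single (0 : ℤ) (HahnSeries.single (1 : ℤ) (1 : k)) +
          HahnSeries.single (0 : ℤ) (HahnSeries.single (0 : ℤ) q)) ∧
    ∃ g h : LaurentSeries (LaurentSeries k),
      ((∀ n : ℤ, n < 0 → g.coeff n = 0) ∧
        ∀ n : ℤ, ∀ m : ℤ, m < 0 → (g.coeff n).coeff m = 0) ∧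
      ((∀ n : ℤ, n < 0 → h.coeff n = 0) ∧
        ∀ n : ℤ, ∀ m : ℤ, m < 0 → (h.coeff n).coeff m = 0) ∧
      h ≠ 0 ∧
      HahnSeries.single (e : ℤ) (1 : LaurentSeries k) * D f = g / h := by
  have hek : ((e : ℕ) : k) ≠ 0 := Nat.cast_ne_zero.mpr (by omega)
  haveI : RightDistribClass (LaurentSeries (LaurentSeries k)) := ⟨fun a b c => by ring⟩
  haveI : LeftDistribClass (LaurentSeries (LaurentSeries k)) := ⟨fun a b c => by ring⟩
  haveI : RightDistribClass (LaurentSeries k) := ⟨fun a b c => by ring⟩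
  haveI : LeftDistribClass (LaurentSeries k) := ⟨fun a b c => by ring⟩
  have heR : ((e : ℕ) : LaurentSeries k)
      = HahnSeries.C ((e : ℕ) : k) :=
    (map_natCast (HahnSeries.C : k →+* LaurentSeries k) e).symm
  have heRne : ((e : ℕ) : LaurentSeries k) ≠ 0 := by
    rw [heR, HahnSeries.C_apply]
    exact HahnSeries.single_ne_zero hek
  -- du on singles and zero
  have hdu0 : du 0 = 0 := by
    apply HahnSeries.coeff_injective; funext m
    rw [hdu]; simp
  have hduS : ∀ (a : ℤ) (c : k),
      du (HahnSeries.single a c) = HahnSeries.single (a - 1) (a • c) := by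
    intro a c
    apply HahnSeries.coeff_injective; funext m
    rw [hdu]
    simp only [HahnSeries.coeff_single]
    by_cases h : m = a - 1
    · subst h
      rw [show a - 1 + 1 = a by ring, if_pos rfl, if_pos rfl]
    · rw [if_neg (by omega), if_neg h, smul_zero]
  -- e times D f, coefficientwise
  have heD : ∀ m : ℤ, ((e : ℕ) : LaurentSeries k) * (D f).coeff m =
      HahnSeries.C (((m + (e : ℤ) : ℤ) : k)) * f.coeff (m + e)
        - (HahnSeries.single (1 : ℤ) (1 : k) + HahnSeries.C q) * du (f.coeff (m + e)) := by
    intro m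
    rw [hD, mul_sub]
    congr 1
    · rw [← mul_assoc, heR, ← map_mul, mul_comm ((e : ℕ) : k), div_mul_cancel₀ _ hek]
    · rw [← mul_assoc, mul_comm (((e : ℕ) : LaurentSeries k)), div_mul_cancel₀ _ heRne]
  have heDval : ∀ m : ℤ, ((e : ℕ) : LaurentSeries k) * (D f).coeff m =
      (if 1 ≤ m + (e : ℤ) then
        HahnSeries.single (-(m + (e : ℤ))) ((2 : k) * (-1 : k) ^ (m + (e : ℤ) + 1))
          + HahnSeries.single (-(m + (e : ℤ)) - 1) (q * (-1 : k) ^ (m + (e : ℤ) + 1))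
      else 0) := by
    intro m
    rw [heD, hf]
    by_cases h : 1 ≤ m + (e : ℤ)
    · rw [if_pos h, if_pos h, hduS]
      have hnk : ((m + (e : ℤ) : ℤ) : k) ≠ 0 := Int.cast_ne_zero.mpr (by omega)
      rw [HahnSeries.C_apply, HahnSeries.C_apply, add_mul,
        HahnSeries.single_mul_single, HahnSeries.single_mul_single,
        HahnSeries.single_mul_single]
      apply HahnSeries.coeff_injective; funext j
      simp only [HahnSeries.coeff_single, HahnSeries.coeff_sub, HahnSeries.coeff_add,
        zsmul_eq_mul, Int.cast_neg]
      split_ifs with h1 h2 h3 h4 h5 h6 h7 <;>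
        first
          | (exfalso; omega)
          | (push_cast at hnk ⊢; field_simp [hnk]; try ring)
          | simp
    · rw [if_neg h, if_neg h, hdu0, mul_zero, mul_zero, sub_zero]
  -- the constant prefactor
  have hE : ((e : ℕ) : LaurentSeries (LaurentSeries k))
      = HahnSeries.single (0 : ℤ) (HahnSeries.single (0 : ℤ) ((e : ℕ) : k)) := by
    rw [← map_natCast (HahnSeries.C : LaurentSeries k →+* LaurentSeries (LaurentSeries k)) e,
      HahnSeries.C_apply, heR, HahnSeries.C_apply]
  have hfac : (e : LaurentSeries (LaurentSeries k)) *
        HahnSeries.single (0 : ℤ) (HahnSeries.single (1 : ℤ) (1 : k)) *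
        (HahnSeries.single (0 : ℤ) (HahnSeries.single (1 : ℤ) (1 : k)) +
          HahnSeries.single (1 : ℤ) (1 : LaurentSeries k)) =
      HahnSeries.single (0 : ℤ) (HahnSeries.single (2 : ℤ) ((e : ℕ) : k))
        + HahnSeries.single (1 : ℤ) (HahnSeries.single (1 : ℤ) ((e : ℕ) : k)) := by
    rw [hE]
    simp only [mul_add, HahnSeries.single_mul_single, zero_add, add_zero, one_mul, mul_one,
      one_add_one_eq_two]
  have hsplit : ∀ (j : ℤ) (x : LaurentSeries k),
      HahnSeries.single j ((e : ℕ) : k) * x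
        = HahnSeries.single j (1 : k) * (((e : ℕ) : LaurentSeries k) * x) := by
    intro j x
    rw [← mul_assoc, heR, HahnSeries.C_apply, HahnSeries.single_mul_single]
    norm_num
  -- main identity
  have key : (e : LaurentSeries (LaurentSeries k)) *
        HahnSeries.single (0 : ℤ) (HahnSeries.single (1 : ℤ) (1 : k)) *
        (HahnSeries.single (0 : ℤ) (HahnSeries.single (1 : ℤ) (1 : k)) +
          HahnSeries.single (1 : ℤ) (1 : LaurentSeries k)) *
        HahnSeries.single (e : ℤ) (1 : LaurentSeries k) * D f =
      HahnSeries.single (1 : ℤ) (1 : LaurentSeries k) *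
        (2 * HahnSeries.single (0 : ℤ) (HahnSeries.single (1 : ℤ) (1 : k)) +
          HahnSeries.single (0 : ℤ) (HahnSeries.single (0 : ℤ) q)) := by
    have hg' : HahnSeries.single (1 : ℤ) (1 : LaurentSeries k) *
        (2 * HahnSeries.single (0 : ℤ) (HahnSeries.single (1 : ℤ) (1 : k)) +
          HahnSeries.single (0 : ℤ) (HahnSeries.single (0 : ℤ) q)) =
        HahnSeries.single (1 : ℤ)
          (HahnSeries.single (1 : ℤ) (2 : k) + HahnSeries.single (0 : ℤ) q) := by
      simp only [two_mul, mul_add, HahnSeries.single_mul_single, one_mul, mul_one, add_zero,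
        zero_add, ← hs_single_add, one_add_one_eq_two]
    rw [hfac, hg', add_mul, HahnSeries.single_mul_single, HahnSeries.single_mul_single,
      mul_one, mul_one, add_mul]
    apply HahnSeries.coeff_injective; funext n
    rw [HahnSeries.coeff_add, hs_single_mul_coeff, hs_single_mul_coeff, hsplit, hsplit,
      heDval, heDval, HahnSeries.coeff_single,
      show n - (0 + (e : ℤ)) + (e : ℤ) = n by ring,
      show n - (1 + (e : ℤ)) + (e : ℤ) = n - 1 by ring]
    by_cases hn1 : n = 1
    · subst hn1
      rw [if_pos (by norm_num), if_neg (by norm_num), if_pos rfl, mul_zero, add_zero,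
        mul_add, HahnSeries.single_mul_single, HahnSeries.single_mul_single]
      norm_num
    · by_cases hn0 : n < 1
      · rw [if_neg (by omega), if_neg (by omega), if_neg hn1, mul_zero, mul_zero, add_zero]
      · have hn2 : 2 ≤ n := by omega
        rw [if_pos (by omega), if_pos (by omega), if_neg hn1]
        have hAB : ((-1 : k)) ^ (n + 1) = -((-1 : k) ^ (n - 1 + 1)) := by
          rw [show n + 1 = (n - 1 + 1) + 1 by ring,
            zpow_add₀ (by norm_num : (-1 : k) ≠ 0), zpow_one, mul_neg_one]
        rw [hAB]
        simp only [mul_add, HahnSeries.single_mul_single, one_mul]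
        apply HahnSeries.coeff_injective; funext j
        simp only [HahnSeries.coeff_add, HahnSeries.coeff_zero, HahnSeries.coeff_single]
        split_ifs <;> first | (exfalso; omega) | ring | simp
  refine ⟨key, HahnSeries.single (1 : ℤ)
      (HahnSeries.single (1 : ℤ) (2 : k) + HahnSeries.single (0 : ℤ) q),
    HahnSeries.single (0 : ℤ) (HahnSeries.single (2 : ℤ) ((e : ℕ) : k))
      + HahnSeries.single (1 : ℤ) (HahnSeries.single (1 : ℤ) ((e : ℕ) : k)), ?_, ?_, ?_, ?_⟩
  · constructor
    · intro n hn
      exact HahnSeries.coeff_single_of_ne (by omega)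
    · intro n m hm
      simp only [HahnSeries.coeff_single]
      split_ifs
      · rw [HahnSeries.coeff_add, HahnSeries.coeff_single_of_ne (by omega),
          HahnSeries.coeff_single_of_ne (by omega), add_zero]
      · simp
  · constructor
    · intro n hn
      rw [HahnSeries.coeff_add, HahnSeries.coeff_single_of_ne (by omega),
        HahnSeries.coeff_single_of_ne (by omega), add_zero]
    · intro n m hm
      rw [HahnSeries.coeff_add]
      simp only [HahnSeries.coeff_single]
      split_ifs <;>
        simp [HahnSeries.coeff_single_of_ne (show m ≠ (2:ℤ) by omega),
          HahnSeries.coeff_single_of_ne (show m ≠ (1:ℤ) by omega)]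
  · apply HahnSeries.ne_zero_of_coeff_ne_zero (g := (0:ℤ))
    rw [HahnSeries.coeff_add, HahnSeries.coeff_single_same,
      HahnSeries.coeff_single_of_ne (by omega), add_zero]
    exact HahnSeries.single_ne_zero hek
  · have hS : (HahnSeries.single (1 : ℤ) (2 : k) + HahnSeries.single (0 : ℤ) q : LaurentSeries k)
        = HahnSeries.single (1 : ℤ) (2 : k) + HahnSeries.single (0 : ℤ) q := rfl
    have hne : (HahnSeries.single (0 : ℤ) (HahnSeries.single (2 : ℤ) ((e : ℕ) : k))
        + HahnSeries.single (1 : ℤ) (HahnSeries.single (1 : ℤ) ((e : ℕ) : k))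
        : LaurentSeries (LaurentSeries k)) ≠ 0 := by
      apply HahnSeries.ne_zero_of_coeff_ne_zero (g := (0:ℤ))
      rw [HahnSeries.coeff_add, HahnSeries.coeff_single_same,
        HahnSeries.coeff_single_of_ne (by omega), add_zero]
      exact HahnSeries.single_ne_zero hek
    have hx : HahnSeries.single ((e : ℕ) : ℤ) (1 : LaurentSeries k) * D f *
        (HahnSeries.single (0 : ℤ) (HahnSeries.single (2 : ℤ) ((e : ℕ) : k))
          + HahnSeries.single (1 : ℤ) (HahnSeries.single (1 : ℤ) ((e : ℕ) : k))) =
        HahnSeries.single (1 : ℤ)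
          (HahnSeries.single (1 : ℤ) (2 : k) + HahnSeries.single (0 : ℤ) q) := by
      rw [← hfac]
      have hg' : HahnSeries.single (1 : ℤ) (1 : LaurentSeries k) *
          (2 * HahnSeries.single (0 : ℤ) (HahnSeries.single (1 : ℤ) (1 : k)) +
            HahnSeries.single (0 : ℤ) (HahnSeries.single (0 : ℤ) q)) =
          HahnSeries.single (1 : ℤ)
            (HahnSeries.single (1 : ℤ) (2 : k) + HahnSeries.single (0 : ℤ) q) := by
        simp only [two_mul, mul_add, HahnSeries.single_mul_single, one_mul, mul_one, add_zero,
          zero_add, ← hs_single_add, one_add_one_eq_two]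
      rw [← hg', ← key]
      ring
    exact ((div_eq_iff hne).mpr hx.symm).symm
end

section
/- Let K be a field of characteristic zero, β_1,…,β_r ∈ K pairwise distinct and γ_1,…,γ_r ∈ K. If there exists h ∈ K(X) with dh/dX = Σ_{i=1}^r γ_i/(X − β_i), then γ_i = 0 for all i = 1,…,r. (Consequently, an element of K(X) has an antiderivative in K(X) only if its logarithmic part vanishes.) -/
open Polynomial

/-- Let `K` be a field of characteristic zero, `β_1, …, β_r ∈ K`
pairwise distinct and `γ_1, …, γ_r ∈ K`.  If there exists `h ∈ K(X)` with
`dh/dX = Σ_{i=1}^r γ_i/(X − β_i)` (where `d/dX` is the standard derivation of `K(X)`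
extending the derivative of polynomials), then `γ_i = 0` for all `i`; i.e. an element of
`K(X)` has an antiderivative in `K(X)` only if its logarithmic part vanishes. -/
theorem stmt_14 {K : Type*} [Field K] [CharZero K]
    (d : RatFunc K → RatFunc K)
    (hadd : ∀ f g : RatFunc K, d (f + g) = d f + d g)
    (hmul : ∀ f g : RatFunc K, d (f * g) = f * d g + g * d f)
    (hpoly : ∀ p : Polynomial K,
      d (algebraMap (Polynomial K) (RatFunc K) p) =
        algebraMap (Polynomial K) (RatFunc K) (Polynomial.derivative p))
    (r : ℕ) (β γ : Fin r → K) (hβ : Function.Injective β)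
    (h : RatFunc K)
    (hd : d h = ∑ i : Fin r, RatFunc.C (γ i) / (RatFunc.X - RatFunc.C (β i))) :
    ∀ i, γ i = 0 := by
  classical
  set A := algebraMap (Polynomial K) (RatFunc K) with hA
  have hAinj : Function.Injective A := RatFunc.algebraMap_injective K
  set p := h.num with hpdef
  set q := h.denom with hqdef
  have hq0 : q ≠ 0 := h.denom_ne_zero
  have hAq0 : A q ≠ 0 := fun hc => hq0 (hAinj (by simpa using hc))
  have hpq : h * A q = A p := by
    conv_lhs => rw [← h.num_div_denom]
    exact div_mul_cancel₀ _ hAq0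
  have hmain := hmul h (A q)
  rw [hpq, hpoly, hpoly] at hmain
  -- hmain : A (derivative p) = h * A (derivative q) + A q * d h
  have key1 : d h * A q ^ 2 = A (derivative p) * A q - A p * A (derivative q) := by
    calc d h * A q ^ 2
        = (h * A (derivative q) + A q * d h) * A q - (h * A q) * A (derivative q) := by ring
      _ = A (derivative p) * A q - A p * A (derivative q) := by rw [← hmain, hpq]
  -- set up the common denominator of the right-hand side
  set E : Fin r → K[X] := fun j => ∏ k ∈ Finset.univ.erase j, (X - C (β k)) with hE
  set D : K[X] := ∏ j, (X - C (β j)) with hD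
  set N : K[X] := ∑ j, C (γ j) * E j with hN
  have hDE : ∀ j, D = (X - C (β j)) * E j := fun j =>
    (Finset.mul_prod_erase _ _ (Finset.mem_univ j)).symm
  have key2 : d h * A D = A N := by
    rw [hd, hN, map_sum, Finset.sum_mul]
    refine Finset.sum_congr rfl fun j _ => ?_
    have hπ : RatFunc.X - RatFunc.C (β j) = A (X - C (β j)) := by
      rw [map_sub, RatFunc.algebraMap_X, RatFunc.algebraMap_C]
    have hπ0 : A (X - C (β j)) ≠ 0 := by
      rw [map_ne_zero_iff A hAinj]
      exact X_sub_C_ne_zero (β j)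
    rw [hπ, hDE j, map_mul, map_mul, ← RatFunc.algebraMap_C (γ j),
      div_mul_eq_mul_div, mul_comm (A (X - C (β j))) (A (E j)), ← mul_assoc,
      mul_div_assoc, div_self hπ0, mul_one]
  have key3 : (derivative p * q - p * derivative q) * D = N * q ^ 2 := by
    apply hAinj
    rw [map_mul, map_mul, map_sub, map_mul, map_mul, map_pow, ← key1]
    calc (d h * A q ^ 2) * A D = (d h * A D) * A q ^ 2 := by ring
      _ = A N * A q ^ 2 := by rw [key2]
  intro i
  have hEi : (E i).eval (β i) ≠ 0 := by
    rw [hE, eval_prod]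
    refine Finset.prod_ne_zero_iff.mpr fun k hk => ?_
    have hki : k ≠ i := Finset.ne_of_mem_erase hk
    simp only [eval_sub, eval_X, eval_C, sub_ne_zero]
    exact fun hc => hki (hβ hc.symm)
  have hNev : N.eval (β i) = γ i * (E i).eval (β i) := by
    rw [hN, eval_finset_sum]
    rw [Finset.sum_eq_single i]
    · simp
    · intro j _ hji
      have : (E j).eval (β i) = 0 := by
        rw [hE, eval_prod]
        refine Finset.prod_eq_zero (Finset.mem_erase.mpr ⟨hji.symm, Finset.mem_univ i⟩) ?_
        simp
      simp [this]
    · simp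
  obtain ⟨u, hqu, hu⟩ := q.exists_eq_pow_rootMultiplicity_mul_and_not_dvd hq0 (β i)
  have hub : u.eval (β i) ≠ 0 := fun hc => hu (dvd_iff_isRoot.mpr hc)
  rcases Nat.eq_zero_or_pos (rootMultiplicity (β i) q) with hm0 | hmpos
  · -- no pole of h at β i : evaluate the identity at β i
    rw [hm0, pow_zero, one_mul] at hqu
    have hqb : q.eval (β i) ≠ 0 := by rw [hqu]; exact hub
    have := congrArg (eval (β i)) key3
    rw [eval_mul, eval_mul, eval_pow, hDE i, eval_mul] at this
    simp only [eval_sub, eval_X, eval_C, sub_self, zero_mul, mul_zero] at this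
    rw [hNev] at this
    have h0 : ((E i).eval (β i) * (γ i * eval (β i) q ^ 2) : K) = γ i * eval (β i) (E i) * eval (β i) q ^ 2 := by ring
    have h0' : γ i * (E i).eval (β i) * q.eval (β i) ^ 2 = 0 := this.symm
    rcases mul_eq_zero.mp h0' with h1 | h1
    · rcases mul_eq_zero.mp h1 with h2 | h2
      · exact h2
      · exact absurd h2 hEi
    · exact absurd h1 (pow_ne_zero 2 hqb)
  · -- h has a pole at β i : impossible
    exfalso
    obtain ⟨s, hs⟩ : ∃ s, rootMultiplicity (β i) q = s + 1 :=
      ⟨rootMultiplicity (β i) q - 1, (Nat.succ_pred_eq_of_pos hmpos).symm⟩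
    rw [hs] at hqu
    set π : K[X] := X - C (β i) with hπdef
    have hπ0 : π ≠ 0 := X_sub_C_ne_zero (β i)
    have hpb : p.eval (β i) ≠ 0 := by
      intro hc
      have hdp : π ∣ p := dvd_iff_isRoot.mpr hc
      have hdq : π ∣ q := ⟨π ^ s * u, by rw [hqu]; ring⟩
      exact not_isUnit_X_sub_C (β i) (h.isCoprime_num_denom.isUnit_of_dvd' hdp hdq)
    set W : K[X] := π * derivative p * u - C ((s : K) + 1) * p * u - π * p * derivative u
      with hW
    have hq' : derivative q = C ((s : K) + 1) * π ^ s * u + π ^ (s + 1) * derivative u := by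
      rw [hqu, derivative_mul, derivative_pow_succ, hπdef, derivative_X_sub_C, mul_one]
    have key4 : derivative p * q - p * derivative q = π ^ s * W := by
      rw [hq', hqu, hW]; ring
    have key5 : π ^ (s + 1) * (W * E i) = π ^ (s + 1) * (π ^ (s + 1) * (N * u ^ 2)) := by
      have := key3
      rw [key4, hqu, hDE i] at this
      calc π ^ (s + 1) * (W * E i) = π ^ s * W * (π * E i) := by ring
        _ = N * (π ^ (s + 1) * u) ^ 2 := this
        _ = π ^ (s + 1) * (π ^ (s + 1) * (N * u ^ 2)) := by ring
    have key6 : W * E i = π ^ (s + 1) * (N * u ^ 2) :=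
      mul_left_cancel₀ (pow_ne_zero _ hπ0) key5
    have := congrArg (eval (β i)) key6
    rw [eval_mul, eval_mul, eval_pow, hπdef] at this
    simp only [eval_sub, eval_X, eval_C, sub_self, zero_pow (Nat.succ_ne_zero s),
      zero_mul] at this
    have hWb : W.eval (β i) = -(((s : K) + 1) * p.eval (β i) * u.eval (β i)) := by
      rw [hW, hπdef]
      simp only [eval_sub, eval_mul, eval_X, eval_C, sub_self, zero_mul, mul_zero]
      ring
    rw [hWb] at this
    have hs0 : ((s : K) + 1) ≠ 0 := Nat.cast_add_one_ne_zero s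
    rcases mul_eq_zero.mp this with h1 | h1
    · rw [neg_eq_zero] at h1
      rcases mul_eq_zero.mp h1 with h2 | h2
      · rcases mul_eq_zero.mp h2 with h3 | h3
        · exact hs0 h3
        · exact hpb h3
      · exact hub h2
    · exact hEi h1
end

section
/- Let (K, δ) be a differential field of characteristic zero, and let δ̃ be the unique derivation on K(X) extending δ with δ̃(X) = 0. Suppose a ∈ K(X) is written a = dh/dX + Σ_{i=1}^r γ_i/(X − β_i) with h ∈ K(X), pairwise distinct β_1,…,β_r ∈ K and γ_1,…,γ_r ∈ K. Then there exists h̃ ∈ K(X) with δ̃(a) = dh̃/dX + Σ_{i=1}^r δ(γ_i)/(X − β_i); that is, the logarithmic part of δ̃(a) is Σ_{i=1}^r δ(γ_i)/(X − β_i). -/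
/-- Let `(K, δ)` be a differential field of characteristic zero, `d/dX`
the standard derivation of `K(X)` extending the derivative of polynomials, and `δ̃` the
unique derivation of `K(X)` extending `δ` with `δ̃(X) = 0`.  If
`a = dh/dX + Σ_{i=1}^r γ_i/(X − β_i)` with `h ∈ K(X)`, pairwise distinct `β_i ∈ K` and
`γ_i ∈ K`, then there exists `h̃ ∈ K(X)` with
`δ̃(a) = dh̃/dX + Σ_{i=1}^r δ(γ_i)/(X − β_i)`; that is, the logarithmic part of `δ̃(a)`
is `Σ_{i=1}^r δ(γ_i)/(X − β_i)`. -/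
theorem stmt_16 {K : Type*} [Field K] [CharZero K]
    (δ : K → K)
    (hδadd : ∀ x y : K, δ (x + y) = δ x + δ y)
    (hδmul : ∀ x y : K, δ (x * y) = x * δ y + y * δ x)
    (d : RatFunc K → RatFunc K)
    (hdadd : ∀ f g : RatFunc K, d (f + g) = d f + d g)
    (hdmul : ∀ f g : RatFunc K, d (f * g) = f * d g + g * d f)
    (hdpoly : ∀ p : Polynomial K,
      d (algebraMap (Polynomial K) (RatFunc K) p) =
        algebraMap (Polynomial K) (RatFunc K) (Polynomial.derivative p))
    (D : RatFunc K → RatFunc K)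
    (hDadd : ∀ f g : RatFunc K, D (f + g) = D f + D g)
    (hDmul : ∀ f g : RatFunc K, D (f * g) = f * D g + g * D f)
    (hDC : ∀ c : K, D (RatFunc.C c) = RatFunc.C (δ c))
    (hDX : D RatFunc.X = 0)
    (r : ℕ) (β γ : Fin r → K) (hβ : Function.Injective β)
    (a h : RatFunc K)
    (ha : a = d h + ∑ i : Fin r, RatFunc.C (γ i) / (RatFunc.X - RatFunc.C (β i))) :
    ∃ htil : RatFunc K,
      D a = d htil + ∑ i : Fin r, RatFunc.C (δ (γ i)) / (RatFunc.X - RatFunc.C (β i)) := by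
  classical
  -- basic facts
  have hD0 : D 0 = 0 := by
    have := hDadd 0 0; simp at this; exact this
  have hd0 : d 0 = 0 := by
    have := hdadd 0 0; simp at this; exact this
  have hD1 : D 1 = 0 := by
    have := hDmul 1 1; simp at this; exact this
  have hd1 : d 1 = 0 := by
    have := hdmul 1 1; simp at this; exact this
  have hDneg : ∀ f, D (-f) = -D f := by
    intro f
    have h := hDadd f (-f); rw [add_neg_cancel, hD0] at h
    exact eq_neg_of_add_eq_zero_right h.symm
  have hdneg : ∀ f, d (-f) = -d f := by
    intro f
    have h := hdadd f (-f); rw [add_neg_cancel, hd0] at h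
    exact eq_neg_of_add_eq_zero_right h.symm
  have hDsub : ∀ f g, D (f - g) = D f - D g := by
    intro f g; rw [sub_eq_add_neg, hDadd, hDneg]; ring
  have hdC : ∀ c : K, d (RatFunc.C c) = 0 := by
    intro c
    have := hdpoly (Polynomial.C c)
    simpa [RatFunc.algebraMap_C] using this
  have hdX : d RatFunc.X = 1 := by
    have := hdpoly Polynomial.X
    simpa [RatFunc.algebraMap_X] using this
  -- sums
  have Dsum : ∀ (s : Finset (Fin r)) (f : Fin r → RatFunc K),
      D (∑ i ∈ s, f i) = ∑ i ∈ s, D (f i) := fun s f =>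
    map_sum (AddMonoidHom.mk' D hDadd) f s
  have dsum : ∀ (s : Finset (Fin r)) (f : Fin r → RatFunc K),
      d (∑ i ∈ s, f i) = ∑ i ∈ s, d (f i) := fun s f =>
    map_sum (AddMonoidHom.mk' d hdadd) f s
  -- inverse rule
  have inv_rule : ∀ (F : RatFunc K → RatFunc K),
      (∀ f g, F (f * g) = f * F g + g * F f) → F 1 = 0 →
      ∀ u : RatFunc K, u ≠ 0 → F u⁻¹ = -(F u / u ^ 2) := by
    intro F hF h1 u hu
    have key := hF u u⁻¹
    rw [mul_inv_cancel₀ hu, h1] at key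
    have key' : u * F u⁻¹ + u⁻¹ * F u = 0 := key.symm
    have h2 : u * F u⁻¹ = -(u⁻¹ * F u) := eq_neg_of_add_eq_zero_left key'
    apply mul_left_cancel₀ hu
    rw [h2]
    field_simp
  -- commutation of D and d
  set E : RatFunc K → RatFunc K := fun f => D (d f) - d (D f) with hE
  have hEadd : ∀ f g, E (f + g) = E f + E g := by
    intro f g; simp only [hE, hdadd, hDadd]; ring
  have hEmul : ∀ f g, E (f * g) = f * E g + g * E f := by
    intro f g
    simp only [hE, hdmul, hDmul, hDadd, hdadd]
    ring
  have hE1 : E 1 = 0 := by simp [hE, hd1, hD1, hd0, hD0]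
  have hEpoly : ∀ p : Polynomial K, E (algebraMap (Polynomial K) (RatFunc K) p) = 0 := by
    intro p
    induction p using Polynomial.induction_on with
    | C c =>
        simp [hE, RatFunc.algebraMap_C, hdC, hDC, hd0, hD0]
    | add p q hp hq =>
        rw [map_add, hEadd, hp, hq, add_zero]
    | monomial n c ih =>
        have heq : (algebraMap (Polynomial K) (RatFunc K)) (Polynomial.C c * Polynomial.X ^ (n + 1))
            = (algebraMap (Polynomial K) (RatFunc K)) (Polynomial.C c * Polynomial.X ^ n) *
              (algebraMap (Polynomial K) (RatFunc K)) Polynomial.X := by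
          rw [← map_mul]; ring_nf
        rw [heq, hEmul, ih]
        have hEX : E ((algebraMap (Polynomial K) (RatFunc K)) Polynomial.X) = 0 := by
          simp [hE, RatFunc.algebraMap_X, hdX, hDX, hd0, hD1]
        rw [hEX]; ring
  have hEall : ∀ f : RatFunc K, E f = 0 := by
    intro f
    induction f using RatFunc.induction_on with
    | f p q hq =>
        have hq' : (algebraMap (Polynomial K) (RatFunc K)) q ≠ 0 := by
          simpa using hq
        have hinv : E ((algebraMap (Polynomial K) (RatFunc K)) q)⁻¹ = 0 := by
          have key := hEmul ((algebraMap (Polynomial K) (RatFunc K)) q)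
            ((algebraMap (Polynomial K) (RatFunc K)) q)⁻¹
          rw [mul_inv_cancel₀ hq', hE1, hEpoly] at key
          have key' := key.symm
          simp at key'
          rcases key' with h1 | h2
          · exact absurd h1 hq
          · exact h2
        rw [div_eq_mul_inv, hEmul, hEpoly, hinv]
        ring
  have hcomm : ∀ f, D (d f) = d (D f) := by
    intro f
    have hf := hEall f
    simp only [hE, sub_eq_zero] at hf
    exact hf
  -- nonvanishing of X - C β
  have hu_ne : ∀ b : K, RatFunc.X - RatFunc.C b ≠ 0 := by
    intro b
    have heq : RatFunc.X - RatFunc.C b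
        = algebraMap (Polynomial K) (RatFunc K) (Polynomial.X - Polynomial.C b) := by
      simp [RatFunc.algebraMap_X, RatFunc.algebraMap_C]
    rw [heq]
    exact RatFunc.algebraMap_ne_zero (Polynomial.X_sub_C_ne_zero b)
  -- per-term computation
  have hterm : ∀ b c : K,
      D (RatFunc.C c / (RatFunc.X - RatFunc.C b))
        = RatFunc.C (δ c) / (RatFunc.X - RatFunc.C b)
          + d (-(RatFunc.C (c * δ b) / (RatFunc.X - RatFunc.C b))) := by
    intro b c
    set u : RatFunc K := RatFunc.X - RatFunc.C b with hu
    have hune : u ≠ 0 := hu_ne b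
    have hDu : D u = -RatFunc.C (δ b) := by
      rw [hu, hDsub, hDX, hDC]; ring
    have hdu : d u = 1 := by
      rw [hu]
      have := hdadd RatFunc.X (-(RatFunc.C b))
      rw [hdneg, hdX, hdC] at this
      simpa [sub_eq_add_neg] using this
    have hDinv : D u⁻¹ = RatFunc.C (δ b) / u ^ 2 := by
      rw [inv_rule D hDmul hD1 u hune, hDu]; ring
    have hdinv : d u⁻¹ = -(1 / u ^ 2) := by
      rw [inv_rule d hdmul hd1 u hune, hdu]
    have lhs : D (RatFunc.C c / u) = RatFunc.C c * (RatFunc.C (δ b) / u ^ 2)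
        + u⁻¹ * RatFunc.C (δ c) := by
      rw [div_eq_mul_inv, hDmul, hDinv, hDC]
    have rhs : d (-(RatFunc.C (c * δ b) / u))
        = RatFunc.C (c * δ b) * (1 / u ^ 2) := by
      rw [hdneg, div_eq_mul_inv, hdmul, hdinv, hdC]
      ring
    rw [lhs, rhs]
    have hCmul : RatFunc.C (c * δ b) = RatFunc.C c * RatFunc.C (δ b) := map_mul _ _ _
    rw [hCmul]
    field_simp
    ring
  -- conclusion
  refine ⟨D h + ∑ i : Fin r, -(RatFunc.C (γ i * δ (β i)) / (RatFunc.X - RatFunc.C (β i))), ?_⟩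
  rw [ha, hDadd, hcomm, Dsum]
  rw [hdadd, dsum]
  rw [Finset.sum_congr rfl (fun i _ => hterm (β i) (γ i))]
  rw [Finset.sum_add_distrib]
  ring
end

section
/- Let (K, δ) be a differential field of characteristic zero and L(y) = Σ_{i=0}^n a_i δ^i(y) a linear differential operator with coefficients a_0,…,a_n ∈ K. Let b_1,…,b_m ∈ K satisfy L(b_i) = 0 for all i, and set a = Σ_{i=1}^m b_i·(x − i)^{−1} ∈ K[[x]], where (x − i)^{−1} denotes the inverse of x − i·1 in K[[x]]. Let y ∈ K[[x]] be the unique power series with constant coefficient 1 and y′ = a. Then L̃(y) = a_0 (a constant power series), where L̃(y) = Σ_{i=0}^n a_i δ̃^i(y) and δ̃ is the coefficientwise extension of δ to K[[x]]. -/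
open PowerSeries

/-- Coefficients of the inverse of `X - C c` for `c ≠ 0`. -/
lemma aux_inv_coeff {K : Type*} [Field K] (c : K) (hc : c ≠ 0) (k : ℕ) :
    PowerSeries.coeff k (PowerSeries.X - PowerSeries.C c)⁻¹ = -(c⁻¹) ^ (k + 1) := by
  have hconst : PowerSeries.constantCoeff (PowerSeries.X - PowerSeries.C c) ≠ 0 := by
    simp [hc]
  have h : (PowerSeries.X - PowerSeries.C c)⁻¹
      = PowerSeries.mk (fun k => -(c⁻¹) ^ (k + 1)) := by
    rw [PowerSeries.inv_eq_iff_mul_eq_one hconst]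
    ext n
    rcases n with _ | n
    · simp [PowerSeries.coeff_zero_mul_X, PowerSeries.coeff_mul_C, mul_sub,
        PowerSeries.coeff_zero_eq_constantCoeff, inv_mul_cancel₀ hc]
    · rw [mul_sub, map_sub, PowerSeries.coeff_succ_mul_X, PowerSeries.coeff_mul_C]
      simp only [PowerSeries.coeff_mk, PowerSeries.coeff_one, Nat.succ_ne_zero, if_false]
      field_simp
      linear_combination ((1 / c) ^ (n + 1)) * (mul_one_div_cancel hc)
  rw [h, PowerSeries.coeff_mk]

/-- Let `(K, δ)` be a differential field of characteristic zero and
`L(y) = Σ_{i=0}^n a_i δ^i(y)` a linear differential operator over `K`.  Let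
`b_1, …, b_m ∈ K` satisfy `L(b_i) = 0` and set `a = Σ_{i=1}^m b_i·(x − i)⁻¹ ∈ K[[x]]`.
If `y ∈ K[[x]]` is the power series with constant coefficient `1` and `y′ = a`, then
`L̃(y) = a_0` (a constant power series), where `L̃(y) = Σ_{i=0}^n a_i δ̃^i(y)` and `δ̃` is
the coefficientwise extension of `δ` to `K[[x]]`. -/
theorem stmt_17 {K : Type*} [Field K] [CharZero K]
    (δ : K → K)
    (hδadd : ∀ x y : K, δ (x + y) = δ x + δ y)
    (hδmul : ∀ x y : K, δ (x * y) = x * δ y + y * δ x)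
    (dK : PowerSeries K → PowerSeries K)
    (hdK : ∀ (f : PowerSeries K) (m : ℕ),
      PowerSeries.coeff m (dK f) = δ (PowerSeries.coeff m f))
    (n : ℕ) (a : Fin (n + 1) → K)
    (m : ℕ) (b : Fin m → K)
    (hb : ∀ i : Fin m, (∑ j : Fin (n + 1), a j * δ^[(j : ℕ)] (b i)) = 0)
    (A : PowerSeries K)
    (hA : A = ∑ i : Fin m,
      PowerSeries.C (b i) * (PowerSeries.X - PowerSeries.C ((i : ℕ) + 1 : K))⁻¹)
    (y : PowerSeries K)
    (hy0 : PowerSeries.constantCoeff y = 1)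
    (hy1 : PowerSeries.derivativeFun y = A) :
    (∑ j : Fin (n + 1), PowerSeries.C (a j) * dK^[(j : ℕ)] y) =
      PowerSeries.C (a 0) := by
  -- basic derivation facts
  have hδ0 : δ 0 = 0 := by have := hδadd 0 0; simpa using this
  have hδ1 : δ 1 = 0 := by have := hδmul 1 1; simpa using this
  have hδnat : ∀ k : ℕ, δ (k : K) = 0 := by
    intro k
    induction k with
    | zero => simpa using hδ0
    | succ k ih => push_cast; rw [hδadd]; simp [ih, hδ1]
  have hδneg : ∀ x : K, δ x = 0 → δ (-x) = 0 := by
    intro x hx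
    have := hδadd x (-x)
    simp [hx, hδ0] at this
    exact this.symm
  have hδmul0 : ∀ x z : K, δ x = 0 → δ z = 0 → δ (x * z) = 0 := by
    intro x z hx hz; rw [hδmul]; simp [hx, hz]
  have hδinv : ∀ x : K, δ x = 0 → δ x⁻¹ = 0 := by
    intro x hx
    rcases eq_or_ne x 0 with h | h
    · simp [h, hδ0]
    · have := hδmul x x⁻¹
      rw [mul_inv_cancel₀ h, hδ1, hx] at this
      simp at this
      rcases this with h' | h'
      · exact absurd h' h
      · exact h'
  have hδpow : ∀ (x : K) (k : ℕ), δ x = 0 → δ (x ^ k) = 0 := by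
    intro x k hx
    induction k with
    | zero => simpa using hδ1
    | succ k ih => rw [pow_succ]; exact hδmul0 _ _ ih hx
  -- δ^[j] commutes with multiplication by constants and with sums
  have hiterconst : ∀ (c : K), δ c = 0 → ∀ (j : ℕ) (x : K), δ^[j] (c * x) = c * δ^[j] x := by
    intro c hc j
    induction j with
    | zero => simp
    | succ j ih =>
      intro x
      rw [Function.iterate_succ_apply, hδmul, hc, mul_zero, add_zero, ih,
        ← Function.iterate_succ_apply]
  have hitersum : ∀ (j : ℕ) (f : Fin m → K),
      δ^[j] (∑ i, f i) = ∑ i, δ^[j] (f i) := by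
    intro j
    induction j with
    | zero => simp
    | succ j ih =>
      intro f
      have hδsum : ∀ g : Fin m → K, δ (∑ i, g i) = ∑ i, δ (g i) := by
        intro g
        exact map_sum (AddMonoidHom.mk' δ hδadd) g Finset.univ
      rw [Function.iterate_succ_apply, hδsum, ih]
      exact Finset.sum_congr rfl fun i _ => (Function.iterate_succ_apply δ j (f i)).symm
  have hiter0 : ∀ j : ℕ, δ^[j] (0 : K) = 0 := fun j => Function.iterate_fixed hδ0 j
  -- coefficients of dK iterates
  have hdKiter : ∀ (j : ℕ) (f : PowerSeries K) (k : ℕ),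
      PowerSeries.coeff k (dK^[j] f) = δ^[j] (PowerSeries.coeff k f) := by
    intro j
    induction j with
    | zero => simp
    | succ j ih =>
      intro f k
      rw [Function.iterate_succ_apply, ih, hdK, ← Function.iterate_succ_apply]
  ext k
  rw [map_sum]
  simp only [PowerSeries.coeff_C_mul, hdKiter]
  rcases k with _ | k
  · -- constant coefficient
    have h0 : PowerSeries.coeff 0 y = 1 := by
      rw [PowerSeries.coeff_zero_eq_constantCoeff_apply, hy0]
    rw [PowerSeries.coeff_C]
    simp only [if_pos rfl, h0]
    rw [Fin.sum_univ_succ]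
    simp only [Fin.val_zero, Function.iterate_zero, id_eq, mul_one]
    have : ∀ j : Fin n, a j.succ * δ^[(j.succ : ℕ)] (1 : K) = 0 := by
      intro j
      have : δ^[(j : ℕ) + 1] (1 : K) = 0 := by
        rw [Function.iterate_succ_apply, hδ1, hiter0]
      simp [Fin.val_succ, this]
    rw [Finset.sum_congr rfl (fun j _ => this j)]
    simp
  · -- higher coefficients
    have hAk : PowerSeries.coeff k A
        = ∑ i : Fin m, b i * (-((((i : ℕ) : K) + 1)⁻¹) ^ (k + 1)) := by
      rw [hA, map_sum]
      refine Finset.sum_congr rfl fun i _ => ?_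
      rw [PowerSeries.coeff_C_mul, aux_inv_coeff _ (Nat.cast_add_one_ne_zero (i : ℕ))]
    have hyk : PowerSeries.coeff (k + 1) y
        = ∑ i : Fin m, (((k : K) + 1)⁻¹ * (-((((i : ℕ) : K) + 1)⁻¹) ^ (k + 1))) * b i := by
      have h1 : PowerSeries.coeff k (PowerSeries.derivativeFun y)
          = PowerSeries.coeff (k + 1) y * ((k : K) + 1) :=
        PowerSeries.coeff_derivativeFun y k
      rw [hy1, hAk] at h1
      have hk1 : ((k : K) + 1) ≠ 0 := Nat.cast_add_one_ne_zero k
      have h2 : PowerSeries.coeff (k + 1) y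
          = (∑ i : Fin m, b i * (-((((i : ℕ) : K) + 1)⁻¹) ^ (k + 1))) * ((k : K) + 1)⁻¹ := by
        rw [h1, mul_assoc, mul_inv_cancel₀ hk1, mul_one]
      rw [h2, Finset.sum_mul]
      exact Finset.sum_congr rfl fun i _ => by ring
    have hc0 : ∀ i : Fin m,
        δ ((((k : K) + 1)⁻¹ * (-((((i : ℕ) : K) + 1)⁻¹) ^ (k + 1)))) = 0 := by
      intro i
      apply hδmul0
      · apply hδinv
        have : ((k : K) + 1) = ((k + 1 : ℕ) : K) := by push_cast; ring
        rw [this]; exact hδnat _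
      · apply hδneg
        apply hδpow
        apply hδinv
        have : (((i : ℕ) : K) + 1) = (((i : ℕ) + 1 : ℕ) : K) := by push_cast; ring
        rw [this]; exact hδnat _
    rw [hyk]
    have key : ∀ j : Fin (n + 1),
        a j * δ^[(j : ℕ)] (∑ i : Fin m,
          (((k : K) + 1)⁻¹ * (-((((i : ℕ) : K) + 1)⁻¹) ^ (k + 1))) * b i)
        = ∑ i : Fin m, (((k : K) + 1)⁻¹ * (-((((i : ℕ) : K) + 1)⁻¹) ^ (k + 1)))
            * (a j * δ^[(j : ℕ)] (b i)) := by
      intro j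
      rw [hitersum, Finset.mul_sum]
      refine Finset.sum_congr rfl fun i _ => ?_
      rw [hiterconst _ (hc0 i)]
      ring
    rw [Finset.sum_congr rfl (fun j _ => key j), Finset.sum_comm]
    rw [PowerSeries.coeff_C]
    simp only [Nat.succ_ne_zero, if_false]
    refine Finset.sum_eq_zero fun i _ => ?_
    rw [← Finset.mul_sum, hb i, mul_zero]
end

section
/- Let (K, δ) be a differential field of characteristic zero and L(y) = Σ_{i=0}^n a_i δ^i(y) a linear differential operator with coefficients a_0,…,a_n ∈ K. Let b_1,…,b_m ∈ K satisfy L(δ(b_i)) = 0 for all i, and set a = Σ_{i=1}^m b_i·(x − i)^{−1} ∈ K[[x]], where (x − i)^{−1} denotes the inverse of x − i·1 in K[[x]]. Let y ∈ K[[x]] be the unique power series with constant coefficient 1 and y′ = a·y (a unit of K[[x]]). Then L̃(δ̃(y)·y^{−1}) is a constant power series, i.e. L̃(δ̃(y)·y^{−1}) ∈ K, where L̃(f) = Σ_{i=0}^n a_i δ̃^i(f) and δ̃ is the coefficientwise extension of δ to K[[x]]. -/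
open PowerSeries

/-- Let `(K, δ)` be a differential field of characteristic zero and
`L(y) = Σ_{i=0}^n a_i δ^i(y)` a linear differential operator over `K`.  Let
`b_1, …, b_m ∈ K` satisfy `L(δ(b_i)) = 0` and set `a = Σ_{i=1}^m b_i·(x − i)⁻¹ ∈ K[[x]]`.
If `y ∈ K[[x]]` is the power series with constant coefficient `1` and `y′ = a·y`
(a unit of `K[[x]]`), then `L̃(δ̃(y)·y⁻¹)` is a constant power series, i.e.
`L̃(δ̃(y)·y⁻¹) ∈ K`, where `L̃(f) = Σ_{i=0}^n a_i δ̃^i(f)` and `δ̃` is the coefficientwise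
extension of `δ` to `K[[x]]`. -/
theorem stmt_18 {K : Type*} [Field K] [CharZero K]
    (δ : K → K)
    (hδadd : ∀ x y : K, δ (x + y) = δ x + δ y)
    (hδmul : ∀ x y : K, δ (x * y) = x * δ y + y * δ x)
    (dK : PowerSeries K → PowerSeries K)
    (hdK : ∀ (f : PowerSeries K) (m : ℕ),
      PowerSeries.coeff m (dK f) = δ (PowerSeries.coeff m f))
    (n : ℕ) (a : Fin (n + 1) → K)
    (m : ℕ) (b : Fin m → K)
    (hb : ∀ i : Fin m, (∑ j : Fin (n + 1), a j * δ^[(j : ℕ)] (δ (b i))) = 0)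
    (A : PowerSeries K)
    (hA : A = ∑ i : Fin m,
      PowerSeries.C (b i) * (PowerSeries.X - PowerSeries.C ((i : ℕ) + 1 : K))⁻¹)
    (y : PowerSeries K)
    (hy0 : PowerSeries.constantCoeff y = 1)
    (hy1 : PowerSeries.derivativeFun y = A * y)
    (hyu : IsUnit y) :
    ∃ c : K,
      (∑ j : Fin (n + 1), PowerSeries.C (a j) * dK^[(j : ℕ)] (dK y * y⁻¹)) =
        PowerSeries.C c := by
  classical
  -- basic facts about δ
  have hδ0 : δ 0 = 0 := by
    have h := hδadd 0 0
    rw [add_zero] at h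
    exact (right_eq_add.mp h)
  have hδ1 : δ 1 = 0 := by
    have h := hδmul 1 1
    simp only [one_mul] at h
    exact (right_eq_add.mp h)
  have hδneg : ∀ x : K, δ (-x) = -δ x := by
    intro x
    have h := hδadd x (-x)
    rw [add_neg_cancel, hδ0] at h
    linear_combination -h
  have hδnat : ∀ k : ℕ, δ (k : K) = 0 := by
    intro k
    induction k with
    | zero => simpa using hδ0
    | succ k ih => rw [Nat.cast_succ, hδadd, ih, hδ1, add_zero]
  have hδsum : ∀ {α : Type} (s : Finset α) (f : α → K),
      δ (∑ i ∈ s, f i) = ∑ i ∈ s, δ (f i) := by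
    intro α s f
    induction s using Finset.induction_on with
    | empty => simpa using hδ0
    | insert _ _ hx ih => rw [Finset.sum_insert hx, Finset.sum_insert hx, hδadd, ih]
  -- basic facts about dK
  have hd0 : dK 0 = 0 := by
    ext k
    simp [hdK, hδ0]
  have hdadd : ∀ f g, dK (f + g) = dK f + dK g := by
    intro f g
    ext k
    rw [hdK, map_add, map_add, hδadd, hdK, hdK]
  have hdsub : ∀ f g, dK (f - g) = dK f - dK g := by
    intro f g
    ext k
    rw [hdK, map_sub, map_sub, sub_eq_add_neg, hδadd, hδneg, hdK, hdK, sub_eq_add_neg]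
  have hdmul : ∀ f g, dK (f * g) = f * dK g + g * dK f := by
    intro f g
    ext k
    rw [hdK, PowerSeries.coeff_mul, hδsum, map_add, PowerSeries.coeff_mul,
      mul_comm g (dK f), PowerSeries.coeff_mul, ← Finset.sum_add_distrib]
    refine Finset.sum_congr rfl fun p _ => ?_
    rw [hδmul, hdK, hdK]
    ring
  have hdC : ∀ c : K, dK (PowerSeries.C c) = PowerSeries.C (δ c) := by
    intro c
    ext k
    rw [hdK, PowerSeries.coeff_C, PowerSeries.coeff_C]
    split_ifs with h
    · rfl
    · exact hδ0
  have hdone : dK 1 = 0 := by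
    rw [← map_one (PowerSeries.C (R := K)), hdC, hδ1, map_zero]
  have hdX : dK PowerSeries.X = 0 := by
    ext k
    rw [hdK, PowerSeries.coeff_X, map_zero]
    split_ifs with h
    · exact hδ1
    · exact hδ0
  have hdsum : ∀ {α : Type} (s : Finset α) (f : α → PowerSeries K),
      dK (∑ i ∈ s, f i) = ∑ i ∈ s, dK (f i) := by
    intro α s f
    induction s using Finset.induction_on with
    | empty => simpa using hd0
    | insert _ _ hx ih => rw [Finset.sum_insert hx, Finset.sum_insert hx, hdadd, ih]
  -- dK commutes with derivativeFun
  have hcomm : ∀ f, PowerSeries.derivativeFun (dK f) = dK (PowerSeries.derivativeFun f) := by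
    intro f
    ext k
    have hcd : ∀ (f : PowerSeries K) (n : ℕ), PowerSeries.coeff n (PowerSeries.derivativeFun f)
        = PowerSeries.coeff (n + 1) f * (n + 1) := fun f n => PowerSeries.coeff_derivative f n
    rw [hcd, hdK, hdK, hcd, hδmul]
    have h1 : δ ((k : K) + 1) = 0 := by rw [hδadd, hδnat, hδ1, add_zero]
    rw [h1]
    ring
  have hcommiter : ∀ (j : ℕ) f,
      PowerSeries.derivativeFun (dK^[j] f) = dK^[j] (PowerSeries.derivativeFun f) := by
    intro j
    induction j with
    | zero => intro f; rfl
    | succ j ih =>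
      intro f
      rw [Function.iterate_succ_apply', Function.iterate_succ_apply', hcomm, ih]
  -- the simple pole series
  set g : Fin m → PowerSeries K :=
    fun i => (PowerSeries.X - PowerSeries.C ((i : ℕ) + 1 : K))⁻¹ with hg
  have hgc : ∀ i : Fin m,
      PowerSeries.constantCoeff (PowerSeries.X - PowerSeries.C ((i : ℕ) + 1 : K)) ≠ 0 := by
    intro i
    have h1 : (((i : ℕ) : K) + 1) ≠ 0 := by
      exact_mod_cast Nat.succ_ne_zero (i : ℕ)
    simp only [map_sub, PowerSeries.constantCoeff_X, PowerSeries.constantCoeff_C, zero_sub]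
    exact neg_ne_zero.mpr h1
  have hgmul : ∀ i : Fin m,
      (PowerSeries.X - PowerSeries.C ((i : ℕ) + 1 : K)) * g i = 1 := by
    intro i
    exact PowerSeries.mul_inv_cancel _ (hgc i)
  have hdg : ∀ i : Fin m, dK (g i) = 0 := by
    intro i
    have hXc : dK (PowerSeries.X - PowerSeries.C ((i : ℕ) + 1 : K)) = 0 := by
      rw [hdsub, hdX, hdC]
      have : δ (((i : ℕ) : K) + 1) = 0 := by rw [hδadd, hδnat, hδ1, add_zero]
      rw [this, map_zero, sub_zero]
    have h := hdmul (PowerSeries.X - PowerSeries.C ((i : ℕ) + 1 : K)) (g i)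
    rw [hgmul i, hdone, hXc, mul_zero, add_zero] at h
    calc dK (g i) = 1 * dK (g i) := (one_mul _).symm
      _ = (g i * (PowerSeries.X - PowerSeries.C ((i : ℕ) + 1 : K))) * dK (g i) := by
          rw [mul_comm (g i), hgmul i]
      _ = g i * ((PowerSeries.X - PowerSeries.C ((i : ℕ) + 1 : K)) * dK (g i)) := by ring
      _ = 0 := by rw [← h, mul_zero]
  -- iterated dK on combinations of the g i
  have hiter : ∀ (j : ℕ) (d : Fin m → K),
      dK^[j] (∑ i : Fin m, PowerSeries.C (d i) * g i)
        = ∑ i : Fin m, PowerSeries.C (δ^[j] (d i)) * g i := by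
    intro j
    induction j with
    | zero => intro d; rfl
    | succ j ih =>
      intro d
      rw [Function.iterate_succ_apply', ih, hdsum]
      refine Finset.sum_congr rfl fun i _ => ?_
      rw [hdmul, hdg i, mul_zero, zero_add, hdC, Function.iterate_succ_apply', mul_comm]
  have hdA : dK A = ∑ i : Fin m, PowerSeries.C (δ (b i)) * g i := by
    rw [hA, hdsum]
    refine Finset.sum_congr rfl fun i _ => ?_
    rw [hdmul, hdg i, mul_zero, zero_add, hdC, mul_comm]
  -- the logarithmic derivative u
  set u : PowerSeries K := dK y * y⁻¹ with hu
  have hyy : y * y⁻¹ = 1 := PowerSeries.mul_inv_cancel y (by rw [hy0]; exact one_ne_zero)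
  have hdd : ∀ f : PowerSeries K, d⁄dX K f = PowerSeries.derivativeFun f := fun _ => rfl
  have hinv' : PowerSeries.derivativeFun y⁻¹ = -(y⁻¹ ^ 2) * (A * y) := by
    have h := PowerSeries.derivative_inv' (R := K) y
    rw [hdd, hdd, hy1] at h
    linear_combination h
  have hu' : PowerSeries.derivativeFun u = dK A := by
    rw [hu, PowerSeries.derivativeFun_mul, smul_eq_mul, smul_eq_mul, hinv', hcomm, hy1, hdmul]
    linear_combination (dK A - A * dK y * y⁻¹) * hyy
  -- the derivative of the operator applied to u vanishes
  have hdFsum : ∀ {α : Type} (s : Finset α) (f : α → PowerSeries K),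
      PowerSeries.derivativeFun (∑ i ∈ s, f i) = ∑ i ∈ s, PowerSeries.derivativeFun (f i) := by
    intro α s f
    induction s using Finset.induction_on with
    | empty =>
      have hC0 : PowerSeries.derivativeFun (PowerSeries.C (0 : K)) = 0 := PowerSeries.derivative_C
      simpa using hC0
    | insert _ _ hx ih =>
      rw [Finset.sum_insert hx, Finset.sum_insert hx, PowerSeries.derivativeFun_add, ih]
  have hS : PowerSeries.derivativeFun
      (∑ j : Fin (n + 1), PowerSeries.C (a j) * dK^[(j : ℕ)] u) = 0 := by
    rw [hdFsum]
    have hterm : ∀ j : Fin (n + 1),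
        PowerSeries.derivativeFun (PowerSeries.C (a j) * dK^[(j : ℕ)] u)
          = ∑ i : Fin m, PowerSeries.C (a j * δ^[(j : ℕ)] (δ (b i))) * g i := by
      intro j
      have hCz : PowerSeries.derivativeFun (PowerSeries.C (a j)) = 0 := PowerSeries.derivative_C
      rw [PowerSeries.derivativeFun_mul, hCz, smul_zero, add_zero,
        smul_eq_mul, hcommiter, hu', hdA, hiter, Finset.mul_sum]
      refine Finset.sum_congr rfl fun i _ => ?_
      rw [← mul_assoc, ← map_mul]
    calc (∑ j : Fin (n + 1),
            PowerSeries.derivativeFun (PowerSeries.C (a j) * dK^[(j : ℕ)] u))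
        = ∑ j : Fin (n + 1), ∑ i : Fin m,
            PowerSeries.C (a j * δ^[(j : ℕ)] (δ (b i))) * g i := by
          exact Finset.sum_congr rfl fun j _ => hterm j
      _ = ∑ i : Fin m, ∑ j : Fin (n + 1),
            PowerSeries.C (a j * δ^[(j : ℕ)] (δ (b i))) * g i := Finset.sum_comm
      _ = 0 := by
          refine Finset.sum_eq_zero fun i _ => ?_
          rw [← Finset.sum_mul, ← map_sum, hb i, map_zero, zero_mul]
  refine ⟨PowerSeries.constantCoeff
    (∑ j : Fin (n + 1), PowerSeries.C (a j) * dK^[(j : ℕ)] u), ?_⟩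
  apply PowerSeries.derivative.ext
  · have hCz : ∀ c : K, PowerSeries.derivativeFun (PowerSeries.C c) = 0 :=
      fun c => PowerSeries.derivative_C
    rw [hdd, hdd, hS, hCz]
  · rw [PowerSeries.constantCoeff_C]
end
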